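/- Let X, Y, Z be twice continuously differentiable functions on open intervals I, J, K ⊆ ℝ, H ∈ ℝ, and suppose X(u)+Y(v)+Z(w) > 0 and (X(u)+Y(v))Z'(w) + (X'(u)+Y'(v))Z(w) + X'(u)Y(v) + X(u)Y'(v) = −4H(X(u)+Y(v)+Z(w))^{3/2} hold for all u ∈ I, v ∈ J, w ∈ K with u+v+w = 0, and that X(u)+Y(v) ≠ 0 on this set. Define P(u,v) = X'(u)² − Y'(v)² − (X(u)+Y(v))(X''(u)−Y''(v)) and Q(u,v) = (X'(u)−Y'(v))(X'(u)Y(v)+X(u)Y'(v)) − (X(u)+Y(v))(X''(u)Y(v)−X(u)Y''(v)), and set L = 16H²(X'−Y')², M = −P², N = −12H²(X+Y)²(X'−Y')² − 2PQ, R = 4H²(X+Y)³(X'−Y')² − Q² (all evaluated at (u,v)). Then for all u ∈ I, v ∈ J, w ∈ K with u+v+w = 0: L·Z(w)³ + M·Z(w)² + N·Z(w) + R = 0. -/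

import Mathlib

set_option maxHeartbeats 1000000 in
theorem stmt_11 (aI bI aJ bJ aK bK H : ℝ) (X Y Z : ℝ → ℝ)
    (P Q L M N R : ℝ → ℝ → ℝ)
    (hX : ContDiffOn ℝ 2 X (Set.Ioo aI bI))
    (hY : ContDiffOn ℝ 2 Y (Set.Ioo aJ bJ))
    (hZ : ContDiffOn ℝ 2 Z (Set.Ioo aK bK))
    (hpos : ∀ u ∈ Set.Ioo aI bI, ∀ v ∈ Set.Ioo aJ bJ, ∀ w ∈ Set.Ioo aK bK,
      u + v + w = 0 → X u + Y v + Z w > 0)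
    (heq : ∀ u ∈ Set.Ioo aI bI, ∀ v ∈ Set.Ioo aJ bJ, ∀ w ∈ Set.Ioo aK bK,
      u + v + w = 0 →
      (X u + Y v) * deriv Z w + (deriv X u + deriv Y v) * Z w
          + deriv X u * Y v + X u * deriv Y v
        = -4 * H * (X u + Y v + Z w) ^ ((3 : ℝ) / 2))
    (hne : ∀ u ∈ Set.Ioo aI bI, ∀ v ∈ Set.Ioo aJ bJ, ∀ w ∈ Set.Ioo aK bK,
      u + v + w = 0 → X u + Y v ≠ 0)
    (hP : ∀ u ∈ Set.Ioo aI bI, ∀ v ∈ Set.Ioo aJ bJ,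
      P u v = (deriv X u) ^ 2 - (deriv Y v) ^ 2
        - (X u + Y v) * (deriv (deriv X) u - deriv (deriv Y) v))
    (hQ : ∀ u ∈ Set.Ioo aI bI, ∀ v ∈ Set.Ioo aJ bJ,
      Q u v = (deriv X u - deriv Y v) * (deriv X u * Y v + X u * deriv Y v)
        - (X u + Y v) * (deriv (deriv X) u * Y v - X u * deriv (deriv Y) v))
    (hL : ∀ u ∈ Set.Ioo aI bI, ∀ v ∈ Set.Ioo aJ bJ,
      L u v = 16 * H ^ 2 * (deriv X u - deriv Y v) ^ 2)
    (hM : ∀ u ∈ Set.Ioo aI bI, ∀ v ∈ Set.Ioo aJ bJ,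
      M u v = -(P u v) ^ 2)
    (hN : ∀ u ∈ Set.Ioo aI bI, ∀ v ∈ Set.Ioo aJ bJ,
      N u v = -12 * H ^ 2 * (X u + Y v) ^ 2 * (deriv X u - deriv Y v) ^ 2
        - 2 * P u v * Q u v)
    (hR : ∀ u ∈ Set.Ioo aI bI, ∀ v ∈ Set.Ioo aJ bJ,
      R u v = 4 * H ^ 2 * (X u + Y v) ^ 3 * (deriv X u - deriv Y v) ^ 2 - (Q u v) ^ 2) :
    ∀ u ∈ Set.Ioo aI bI, ∀ v ∈ Set.Ioo aJ bJ, ∀ w ∈ Set.Ioo aK bK,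
      u + v + w = 0 →
      L u v * Z w ^ 3 + M u v * Z w ^ 2 + N u v * Z w + R u v = 0 := by
  have hIo : IsOpen (Set.Ioo aI bI) := isOpen_Ioo
  have hJo : IsOpen (Set.Ioo aJ bJ) := isOpen_Ioo
  have hKo : IsOpen (Set.Ioo aK bK) := isOpen_Ioo
  -- first derivatives
  have hXd : ∀ x ∈ Set.Ioo aI bI, HasDerivAt X (deriv X x) x := fun x hx =>
    ((hX.contDiffAt (hIo.mem_nhds hx)).differentiableAt (by norm_num)).hasDerivAt
  have hYd : ∀ x ∈ Set.Ioo aJ bJ, HasDerivAt Y (deriv Y x) x := fun x hx =>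
    ((hY.contDiffAt (hJo.mem_nhds hx)).differentiableAt (by norm_num)).hasDerivAt
  have hZd : ∀ x ∈ Set.Ioo aK bK, HasDerivAt Z (deriv Z x) x := fun x hx =>
    ((hZ.contDiffAt (hKo.mem_nhds hx)).differentiableAt (by norm_num)).hasDerivAt
  -- second derivatives
  have hX' : ContDiffOn ℝ 1 (deriv X) (Set.Ioo aI bI) := hX.deriv_of_isOpen hIo (by norm_num)
  have hY' : ContDiffOn ℝ 1 (deriv Y) (Set.Ioo aJ bJ) := hY.deriv_of_isOpen hJo (by norm_num)
  have hZ' : ContDiffOn ℝ 1 (deriv Z) (Set.Ioo aK bK) := hZ.deriv_of_isOpen hKo (by norm_num)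
  have hXd2 : ∀ x ∈ Set.Ioo aI bI, HasDerivAt (deriv X) (deriv (deriv X) x) x := fun x hx =>
    ((hX'.contDiffAt (hIo.mem_nhds hx)).differentiableAt (by norm_num)).hasDerivAt
  have hYd2 : ∀ x ∈ Set.Ioo aJ bJ, HasDerivAt (deriv Y) (deriv (deriv Y) x) x := fun x hx =>
    ((hY'.contDiffAt (hJo.mem_nhds hx)).differentiableAt (by norm_num)).hasDerivAt
  have hZd2 : ∀ x ∈ Set.Ioo aK bK, HasDerivAt (deriv Z) (deriv (deriv Z) x) x := fun x hx =>
    ((hZ'.contDiffAt (hKo.mem_nhds hx)).differentiableAt (by norm_num)).hasDerivAt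
  intro u hu v hv w hw huvw
  have hwe : -u - v = w := by linarith
  have hue : -v - w = u := by linarith
  set s : ℝ := (X u + Y v + Z w) ^ ((1:ℝ)/2) with hs
  have hS0 : 0 < X u + Y v + Z w := hpos u hu v hv w hw huvw
  have hs2 : s ^ 2 = X u + Y v + Z w := by
    rw [hs, ← Real.rpow_natCast ((X u + Y v + Z w) ^ ((1:ℝ)/2)) 2,
      ← Real.rpow_mul hS0.le]
    norm_num
  have hs3 : (X u + Y v + Z w) ^ ((3:ℝ)/2) = s ^ 3 := by
    rw [hs, ← Real.rpow_natCast ((X u + Y v + Z w) ^ ((1:ℝ)/2)) 3,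
      ← Real.rpow_mul hS0.le]
    norm_num
  -- E0
  have E0 : (X u + Y v) * deriv Z w + (deriv X u + deriv Y v) * Z w
      + deriv X u * Y v + X u * deriv Y v = -4 * H * s ^ 3 := by
    rw [← hs3]; exact heq u hu v hv w hw huvw
  -- derivative in the u direction
  have E1 : deriv X u * deriv Z w + (X u + Y v) * (deriv (deriv Z) w * (-1))
      + (deriv (deriv X) u * Z w + (deriv X u + deriv Y v) * (deriv Z w * (-1)))
      + deriv (deriv X) u * Y v + deriv X u * deriv Y v
      = -4 * H * ((3:ℝ)/2 * (X u + Y v + Z w) ^ ((3:ℝ)/2 - 1)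
          * (deriv X u + deriv Z w * (-1))) := by
    have hm : HasDerivAt (fun u' : ℝ => -u' - v) (-1) u := by
      simpa using ((hasDerivAt_id u).neg.sub_const v)
    have hZc : HasDerivAt (fun u' => Z (-u' - v)) (deriv Z w * (-1)) u := by
      have h0 : HasDerivAt Z (deriv Z w) (-u - v) := hwe ▸ hZd w hw
      exact h0.comp u hm
    have hZ'c : HasDerivAt (fun u' => deriv Z (-u' - v)) (deriv (deriv Z) w * (-1)) u := by
      have h0 : HasDerivAt (deriv Z) (deriv (deriv Z) w) (-u - v) := hwe ▸ hZd2 w hw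
      exact h0.comp u hm
    have hφ : HasDerivAt (fun u' => (X u' + Y v) * deriv Z (-u' - v)
        + (deriv X u' + deriv Y v) * Z (-u' - v) + deriv X u' * Y v + X u' * deriv Y v)
        (deriv X u * deriv Z (-u - v) + (X u + Y v) * (deriv (deriv Z) w * (-1))
          + (deriv (deriv X) u * Z (-u - v) + (deriv X u + deriv Y v) * (deriv Z w * (-1)))
          + deriv (deriv X) u * Y v + deriv X u * deriv Y v) u :=
      (((((hXd u hu).add_const (Y v)).mul hZ'c).add
        (((hXd2 u hu).add_const (deriv Y v)).mul hZc)).add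
        ((hXd2 u hu).mul_const (Y v))).add ((hXd u hu).mul_const (deriv Y v))
    have hS : HasDerivAt (fun u' => X u' + Y v + Z (-u' - v))
        (deriv X u + deriv Z w * (-1)) u := by
      exact (((hXd u hu).add_const (Y v)).add hZc)
    have hrp : HasDerivAt (fun x : ℝ => x ^ ((3:ℝ)/2))
        ((3:ℝ)/2 * (X u + Y v + Z (-u - v)) ^ ((3:ℝ)/2 - 1)) (X u + Y v + Z (-u - v)) :=
      Real.hasDerivAt_rpow_const (Or.inr (by norm_num))
    have hψ : HasDerivAt (fun u' => -4 * H * (X u' + Y v + Z (-u' - v)) ^ ((3:ℝ)/2))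
        (-4 * H * ((3:ℝ)/2 * (X u + Y v + Z (-u - v)) ^ ((3:ℝ)/2 - 1)
          * (deriv X u + deriv Z w * (-1)))) u := by
      have := (hrp.comp u hS).const_mul (-4 * H)
      simpa [Function.comp, mul_assoc] using this
    have hev : (fun u' => (X u' + Y v) * deriv Z (-u' - v)
        + (deriv X u' + deriv Y v) * Z (-u' - v) + deriv X u' * Y v + X u' * deriv Y v)
        =ᶠ[nhds u] (fun u' => -4 * H * (X u' + Y v + Z (-u' - v)) ^ ((3:ℝ)/2)) := by
      have h1 : ∀ᶠ u' in nhds u, u' ∈ Set.Ioo aI bI := hIo.eventually_mem hu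
      have h2 : ∀ᶠ u' in nhds u, (-u' - v) ∈ Set.Ioo aK bK := by
        have hc : Continuous (fun u' : ℝ => -u' - v) := continuous_id.neg.sub continuous_const
        have : (-u - v) ∈ Set.Ioo aK bK := hwe ▸ hw
        exact hc.continuousAt.eventually_mem (hKo.mem_nhds this)
      filter_upwards [h1, h2] with u' h1' h2'
      exact heq u' h1' v hv (-u' - v) h2' (by ring)
    have := hφ.unique (hψ.congr_of_eventuallyEq hev)
    rw [hwe] at this
    exact this
  -- derivative in the v direction
  have E2 : deriv Y v * deriv Z w + (X u + Y v) * (deriv (deriv Z) w * (-1))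
      + (deriv (deriv Y) v * Z w + (deriv X u + deriv Y v) * (deriv Z w * (-1)))
      + deriv (deriv Y) v * X u + deriv X u * deriv Y v
      = -4 * H * ((3:ℝ)/2 * (X u + Y v + Z w) ^ ((3:ℝ)/2 - 1)
          * (deriv Y v + deriv Z w * (-1))) := by
    have hm : HasDerivAt (fun v' : ℝ => -u - v') (-1) v := by
      exact ((hasDerivAt_id v).const_sub (-u))
    have hZc : HasDerivAt (fun v' => Z (-u - v')) (deriv Z w * (-1)) v := by
      have h0 : HasDerivAt Z (deriv Z w) (-u - v) := hwe ▸ hZd w hw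
      exact h0.comp v hm
    have hZ'c : HasDerivAt (fun v' => deriv Z (-u - v')) (deriv (deriv Z) w * (-1)) v := by
      have h0 : HasDerivAt (deriv Z) (deriv (deriv Z) w) (-u - v) := hwe ▸ hZd2 w hw
      exact h0.comp v hm
    have hφ : HasDerivAt (fun v' => (X u + Y v') * deriv Z (-u - v')
        + (deriv X u + deriv Y v') * Z (-u - v') + deriv X u * Y v' + X u * deriv Y v')
        (deriv Y v * deriv Z (-u - v) + (X u + Y v) * (deriv (deriv Z) w * (-1))
          + (deriv (deriv Y) v * Z (-u - v) + (deriv X u + deriv Y v) * (deriv Z w * (-1)))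
          + deriv X u * deriv Y v + X u * deriv (deriv Y) v) v :=
      (((((hYd v hv).const_add (X u)).mul hZ'c).add
        (((hYd2 v hv).const_add (deriv X u)).mul hZc)).add
        ((hYd v hv).const_mul (deriv X u))).add ((hYd2 v hv).const_mul (X u))
    have hS : HasDerivAt (fun v' => X u + Y v' + Z (-u - v'))
        (deriv Y v + deriv Z w * (-1)) v := by
      exact (((hYd v hv).const_add (X u)).add hZc)
    have hrp : HasDerivAt (fun x : ℝ => x ^ ((3:ℝ)/2))
        ((3:ℝ)/2 * (X u + Y v + Z (-u - v)) ^ ((3:ℝ)/2 - 1)) (X u + Y v + Z (-u - v)) :=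
      Real.hasDerivAt_rpow_const (Or.inr (by norm_num))
    have hψ : HasDerivAt (fun v' => -4 * H * (X u + Y v' + Z (-u - v')) ^ ((3:ℝ)/2))
        (-4 * H * ((3:ℝ)/2 * (X u + Y v + Z (-u - v)) ^ ((3:ℝ)/2 - 1)
          * (deriv Y v + deriv Z w * (-1)))) v := by
      have := (hrp.comp v hS).const_mul (-4 * H)
      simpa [Function.comp, mul_assoc] using this
    have hev : (fun v' => (X u + Y v') * deriv Z (-u - v')
        + (deriv X u + deriv Y v') * Z (-u - v') + deriv X u * Y v' + X u * deriv Y v')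
        =ᶠ[nhds v] (fun v' => -4 * H * (X u + Y v' + Z (-u - v')) ^ ((3:ℝ)/2)) := by
      have h1 : ∀ᶠ v' in nhds v, v' ∈ Set.Ioo aJ bJ := hJo.eventually_mem hv
      have h2 : ∀ᶠ v' in nhds v, (-u - v') ∈ Set.Ioo aK bK := by
        have hc : Continuous (fun v' : ℝ => -u - v') := continuous_const.sub continuous_id
        have : (-u - v) ∈ Set.Ioo aK bK := hwe ▸ hw
        exact hc.continuousAt.eventually_mem (hKo.mem_nhds this)
      filter_upwards [h1, h2] with v' h1' h2'
      exact heq u hu v' h1' (-u - v') h2' (by ring)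
    have := hφ.unique (hψ.congr_of_eventuallyEq hev)
    rw [hwe] at this
    linarith [this]
  -- rewrite the exponent 3/2 - 1 = 1/2
  have hexp : (X u + Y v + Z w) ^ ((3:ℝ)/2 - 1) = s := by
    rw [hs]; norm_num
  rw [hexp] at E1 E2
  -- the key identity
  have key : P u v * Z w + Q u v
      = 2 * H * (deriv X u - deriv Y v) * s * ((X u + Y v) - 2 * Z w) := by
    rw [hP u hu v hv, hQ u hu v hv]
    linear_combination (-(X u + Y v)) * E1 + (X u + Y v) * E2
      + (deriv X u - deriv Y v) * E0
      - 4 * H * (deriv X u - deriv Y v) * s * hs2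
  rw [hL u hu v hv, hM u hu v hv, hN u hu v hv, hR u hu v hv]
  linear_combination (-(P u v * Z w + Q u v
      + 2 * H * (deriv X u - deriv Y v) * s * ((X u + Y v) - 2 * Z w))) * key
    - 4 * H ^ 2 * (deriv X u - deriv Y v) ^ 2 * ((X u + Y v) - 2 * Z w) ^ 2 * hs2
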